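/- Let k be even and G = G_0(u) ⋄ H(u) be a connected k-uniform hypergraph. If x is a first eigenvector of G with x_u = 0 and the restriction x|_{G_0} not identically zero, then λ_min(G_0) = λ_min(G), and x|_{G_0} is a first eigenvector of G_0. -/
import Mathlib


open Finset BigOperators

variable {V : Type*}

/-- A `k`-uniform hypergraph given by its edge set: every edge has exactly `k` vertices. -/
def Uniform [DecidableEq V] (E : Finset (Finset V)) (k : ℕ) : Prop :=
  ∀ e ∈ E, e.card = k

/-- Two vertices are adjacent if some edge contains both. -/
def HAdj [DecidableEq V] (E : Finset (Finset V)) (a b : V) : Prop :=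
  a ≠ b ∧ ∃ e ∈ E, a ∈ e ∧ b ∈ e

/-- The hypergraph is connected: every two vertices are joined by a walk. -/
def HConnected [DecidableEq V] (E : Finset (Finset V)) : Prop :=
  ∀ a b : V, Relation.ReflTransGen (HAdj E) a b

/-- `(lam, x)` satisfies the H-eigen equations of the adjacency tensor:
for each vertex `v`, `∑_{e ∋ v} ∏_{w ∈ e \ {v}} x w = lam * (x v)^(k-1)`. -/
def isEig [Fintype V] [DecidableEq V] (E : Finset (Finset V)) (k : ℕ) (lam : ℝ) (x : V → ℝ) :
    Prop :=
  ∀ v : V, (∑ e ∈ E.filter (fun e => v ∈ e), ∏ w ∈ e.erase v, x w) = lam * x v ^ (k - 1)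

/-- The set of H-eigenvalues of the adjacency tensor of the hypergraph. -/
def specH [Fintype V] [DecidableEq V] (E : Finset (Finset V)) (k : ℕ) : Set ℝ :=
  {lam | ∃ x : V → ℝ, x ≠ 0 ∧ isEig E k lam x}

/-- The least H-eigenvalue of the adjacency tensor. -/
noncomputable def lamMin [Fintype V] [DecidableEq V] (E : Finset (Finset V)) (k : ℕ) : ℝ :=
  sInf (specH E k)

/-- A first eigenvector: a real eigenvector associated with the least H-eigenvalue. -/
def IsFirstEigvec [Fintype V] [DecidableEq V] (E : Finset (Finset V)) (k : ℕ) (x : V → ℝ) :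
    Prop :=
  x ≠ 0 ∧ isEig E k (lamMin E k) x

namespace Stmt9Aux

variable [Fintype V] [DecidableEq V]

/-- The edge polynomial `∑_e ∏_{w∈e} z w`. -/
def Fval (E : Finset (Finset V)) (z : V → ℝ) : ℝ := ∑ e ∈ E, ∏ w ∈ e, z w

/-- `∑_{e ∋ v} ∏_{w ∈ e \ v} z w`. -/
def Sval (E : Finset (Finset V)) (v : V) (z : V → ℝ) : ℝ :=
  ∑ e ∈ E.filter (fun e => v ∈ e), ∏ w ∈ e.erase v, z w

/-- `∑_v z v ^ k`. -/
def Nval (k : ℕ) (z : V → ℝ) : ℝ := ∑ v, z v ^ k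

lemma Fval_update (E : Finset (Finset V)) (v : V) (z : V → ℝ) (a : ℝ) :
    Fval E (Function.update z v a) =
      (∑ e ∈ E.filter (fun e => v ∉ e), ∏ w ∈ e, z w) + a * Sval E v z := by
  rw [Fval, ← Finset.sum_filter_add_sum_filter_not E (fun e => v ∈ e), add_comm, Sval,
    Finset.mul_sum]
  congr 1
  · refine Finset.sum_congr rfl fun e he => ?_
    refine Finset.prod_congr rfl fun w hw => ?_
    have hv : v ∉ e := (Finset.mem_filter.1 he).2
    have hwv : w ≠ v := fun h => hv (h ▸ hw)
    exact Function.update_of_ne hwv a z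
  · refine Finset.sum_congr rfl fun e he => ?_
    have hv : v ∈ e := (Finset.mem_filter.1 he).2
    rw [← Finset.mul_prod_erase e _ hv, Function.update_self]
    congr 1
    refine Finset.prod_congr rfl fun w hw => ?_
    exact Function.update_of_ne (Finset.mem_erase.1 hw).1 a z

lemma Nval_update (k : ℕ) (v : V) (z : V → ℝ) (a : ℝ) :
    Nval k (Function.update z v a) = Nval k z - z v ^ k + a ^ k := by
  have h1 : (fun w => (Function.update z v a w) ^ k) =
      Function.update (fun w => z w ^ k) v (a ^ k) := by
    funext w
    by_cases hw : w = v
    · subst hw; simp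
    · simp [Function.update_of_ne hw]
  rw [Nval, h1, Finset.sum_update_of_mem (Finset.mem_univ v)]
  rw [Nval, ← Finset.sum_erase_add Finset.univ _ (Finset.mem_univ v),
    ← Finset.sdiff_singleton_eq_erase]
  ring

lemma Nval_nonneg {k : ℕ} (hk : Even k) (z : V → ℝ) : 0 ≤ Nval k z :=
  Finset.sum_nonneg fun v _ => hk.pow_nonneg _

lemma Nval_pos {k : ℕ} (hk : Even k) {z : V → ℝ} {v : V} (hv : z v ≠ 0) :
    0 < Nval k z :=
  Finset.sum_pos' (fun w _ => hk.pow_nonneg _) ⟨v, Finset.mem_univ v, hk.pow_pos hv⟩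

lemma Nval_eq_zero {k : ℕ} (hk : Even k) (hk0 : 0 < k) {z : V → ℝ}
    (h : Nval k z = 0) : z = 0 := by
  funext v
  have h1 := (Finset.sum_eq_zero_iff_of_nonneg (fun w (_ : w ∈ Finset.univ) =>
    hk.pow_nonneg (z w))).1 h v (Finset.mem_univ v)
  exact pow_eq_zero_iff hk0.ne' |>.1 h1

lemma sum_mul_Sval {E : Finset (Finset V)} {k : ℕ} (hU : Uniform E k) (z : V → ℝ) :
    ∑ v, z v * Sval E v z = (k : ℝ) * Fval E z := by
  calc ∑ v, z v * Sval E v z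
      = ∑ v, ∑ e ∈ E, (if v ∈ e then z v * ∏ w ∈ e.erase v, z w else 0) := by
        refine Finset.sum_congr rfl fun v _ => ?_
        rw [Sval, Finset.mul_sum, Finset.sum_filter]
    _ = ∑ e ∈ E, ∑ v, (if v ∈ e then z v * ∏ w ∈ e.erase v, z w else 0) :=
        Finset.sum_comm
    _ = ∑ e ∈ E, (k : ℝ) * ∏ w ∈ e, z w := by
        refine Finset.sum_congr rfl fun e he => ?_
        rw [Finset.sum_ite_mem, Finset.univ_inter]
        have : ∀ v ∈ e, z v * ∏ w ∈ e.erase v, z w = ∏ w ∈ e, z w :=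
          fun v hv => Finset.mul_prod_erase e z hv
        rw [Finset.sum_congr rfl this, Finset.sum_const, hU e he, nsmul_eq_mul]
    _ = (k : ℝ) * Fval E z := by rw [Fval, Finset.mul_sum]

lemma eig_eq {E : Finset (Finset V)} {k : ℕ} (hk0 : 0 < k) (hU : Uniform E k)
    {lam : ℝ} {z : V → ℝ} (hz : isEig E k lam z) :
    lam * Nval k z = (k : ℝ) * Fval E z := by
  rw [← sum_mul_Sval hU z, Nval, Finset.mul_sum]
  refine Finset.sum_congr rfl fun v _ => ?_
  rw [Sval]
  rw [hz v]
  have : z v * z v ^ (k - 1) = z v ^ k := by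
    rw [← pow_succ']
    congr 1
    omega
  rw [← mul_assoc, mul_comm (z v) lam, mul_assoc, this]

lemma Fval_smul {E : Finset (Finset V)} {k : ℕ} (hU : Uniform E k) (s : ℝ) (z : V → ℝ) :
    Fval E (s • z) = s ^ k * Fval E z := by
  rw [Fval, Fval, Finset.mul_sum]
  refine Finset.sum_congr rfl fun e he => ?_
  have : ∏ w ∈ e, (s • z) w = ∏ w ∈ e, s * z w := by
    refine Finset.prod_congr rfl fun w _ => rfl
  rw [this, Finset.prod_mul_distrib, Finset.prod_const, hU e he]

lemma Nval_smul (k : ℕ) (s : ℝ) (z : V → ℝ) : Nval k (s • z) = s ^ k * Nval k z := by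
  rw [Nval, Nval, Finset.mul_sum]
  refine Finset.sum_congr rfl fun v _ => ?_
  rw [Pi.smul_apply, smul_eq_mul, mul_pow]

lemma Fval_zero {E : Finset (Finset V)} {k : ℕ} (hk0 : 0 < k) (hU : Uniform E k) :
    Fval E (0 : V → ℝ) = 0 := by
  rw [Fval]
  refine Finset.sum_eq_zero fun e he => ?_
  have hne : e.Nonempty := Finset.card_pos.1 (by rw [hU e he]; exact hk0)
  exact Finset.prod_eq_zero hne.choose_spec rfl


lemma eig_of_eq {E : Finset (Finset V)} {k : ℕ} (hk0 : 0 < k) {mu : ℝ}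
    (hglob : ∀ z : V → ℝ, mu * Nval k z ≤ (k : ℝ) * Fval E z)
    {z : V → ℝ} (heq : (k : ℝ) * Fval E z = mu * Nval k z) :
    isEig E k mu z := by
  intro v
  set S : ℝ := Sval E v z with hS
  set C : ℝ := ∑ e ∈ E.filter (fun e => v ∉ e), ∏ w ∈ e, z w with hC
  set b : ℝ := z v with hb
  set NZ : ℝ := Nval k z with hNZ
  set p : ℝ → ℝ := fun t => (k : ℝ) * (C + (b + t) * S) - mu * (NZ - b ^ k + (b + t) ^ k)
    with hp
  have hpt : ∀ t, 0 ≤ p t := by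
    intro t
    have h1 := hglob (Function.update z v (b + t))
    rw [Fval_update, Nval_update] at h1
    simp only [hp]
    simp only [← hS, ← hC, ← hb, ← hNZ] at h1
    linarith
  have hFz : Fval E z = C + b * S := by
    have h1 := Fval_update E v z b
    rwa [hb, Function.update_eq_self] at h1
  have hp0 : p 0 = 0 := by
    simp only [hp, add_zero]
    rw [hFz] at heq
    linarith
  have hloc : IsLocalMin p 0 :=
    Filter.Eventually.of_forall fun t => by rw [hp0]; exact hpt t
  have hd1 : HasDerivAt (fun t : ℝ => b + t) 1 0 := (hasDerivAt_id 0).const_add b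
  have hd4 : HasDerivAt (fun t : ℝ => (k : ℝ) * (C + (b + t) * S)) ((k : ℝ) * (1 * S)) 0 :=
    ((hd1.mul_const S).const_add C).const_mul (k : ℝ)
  have hd5 : HasDerivAt (fun t : ℝ => (b + t) ^ k) ((k : ℕ) * (b + 0) ^ (k - 1) * 1) 0 :=
    hd1.pow k
  have hd7 : HasDerivAt (fun t : ℝ => mu * (NZ - b ^ k + (b + t) ^ k))
      (mu * ((k : ℕ) * (b + 0) ^ (k - 1) * 1)) 0 :=
    (hd5.const_add (NZ - b ^ k)).const_mul mu
  have hder : HasDerivAt p ((k : ℝ) * (1 * S) - mu * ((k : ℕ) * (b + 0) ^ (k - 1) * 1)) 0 :=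
    hd4.sub hd7
  have hzero := hloc.hasDerivAt_eq_zero hder
  have hkne : (k : ℝ) ≠ 0 := Nat.cast_ne_zero.2 hk0.ne'
  have h2 : (k : ℝ) * S = (k : ℝ) * (mu * b ^ (k - 1)) := by
    rw [add_zero] at hzero
    ring_nf at hzero ⊢
    linarith
  have h3 : S = mu * b ^ (k - 1) := mul_left_cancel₀ hkne h2
  exact h3

lemma exists_min [Nonempty V] (E : Finset (Finset V)) {k : ℕ} (hk : Even k) (hk0 : 0 < k) :
    ∃ z : V → ℝ, Nval k z = 1 ∧ ∀ z' : V → ℝ, Nval k z' = 1 → Fval E z ≤ Fval E z' := by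
  have hNcont : Continuous (fun z : V → ℝ => Nval k z) := by
    unfold Nval
    exact continuous_finset_sum _ fun v _ => (continuous_apply v).pow k
  have hFcont : Continuous (fun z : V → ℝ => Fval E z) := by
    unfold Fval
    exact continuous_finset_sum _ fun e _ =>
      continuous_finset_prod _ fun w _ => continuous_apply w
  set Sph : Set (V → ℝ) := {z | Nval k z = 1} with hSph
  have hne : Sph.Nonempty := by
    obtain ⟨v0⟩ := (inferInstance : Nonempty V)
    refine ⟨fun w => if w = v0 then 1 else 0, ?_⟩
    show Nval k _ = 1
    rw [Nval]
    have : ∀ v ∈ Finset.univ, ((if v = v0 then (1:ℝ) else 0)) ^ k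
        = (if v = v0 then (1:ℝ) else 0) := by
      intro v _
      split_ifs
      · exact one_pow k
      · exact zero_pow hk0.ne'
    rw [Finset.sum_congr rfl this, Finset.sum_ite_eq' Finset.univ v0 (fun _ => (1:ℝ))]
    simp
  have hclosed : IsClosed Sph := isClosed_eq hNcont continuous_const
  have hsub : Sph ⊆ Metric.closedBall 0 1 := by
    intro z hz
    rw [Metric.mem_closedBall, dist_zero_right]
    rw [pi_norm_le_iff_of_nonneg zero_le_one]
    intro v
    rw [Real.norm_eq_abs]
    have h1 : z v ^ k ≤ 1 := by
      have := Finset.single_le_sum (fun w (_ : w ∈ Finset.univ) => hk.pow_nonneg (z w))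
        (Finset.mem_univ v)
      calc z v ^ k ≤ Nval k z := this
        _ = 1 := hz
    have h2 : |z v| ^ k ≤ 1 := by
      rw [← abs_pow]
      calc |z v ^ k| = z v ^ k := abs_of_nonneg (hk.pow_nonneg _)
        _ ≤ 1 := h1
    exact (pow_le_one_iff_of_nonneg (abs_nonneg _) hk0.ne').1 h2
  have hcomp : IsCompact Sph :=
    (isCompact_closedBall (0 : V → ℝ) 1).of_isClosed_subset hclosed hsub
  obtain ⟨z, hzS, hzmin⟩ := hcomp.exists_isMinOn hne hFcont.continuousOn
  exact ⟨z, hzS, fun z' hz' => hzmin hz'⟩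

lemma global_of_min {E : Finset (Finset V)} {k : ℕ} (hk : Even k) (hk0 : 0 < k)
    (hU : Uniform E k) {zs : V → ℝ} (h1 : Nval k zs = 1)
    (hmin : ∀ z' : V → ℝ, Nval k z' = 1 → Fval E zs ≤ Fval E z') :
    ∀ z : V → ℝ, ((k : ℝ) * Fval E zs) * Nval k z ≤ (k : ℝ) * Fval E z := by
  intro z
  by_cases hz : z = 0
  · subst hz
    rw [Fval_zero hk0 hU]
    have : Nval k (0 : V → ℝ) = 0 := by
      rw [Nval]; exact Finset.sum_eq_zero fun v _ => zero_pow hk0.ne'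
    rw [this]
    simp
  · have hc : 0 < Nval k z := by
      obtain ⟨v, hv⟩ := Function.ne_iff.1 hz
      exact Nval_pos hk hv
    set r : ℝ := (Nval k z) ^ ((k : ℝ)⁻¹) with hr
    have hrpos : 0 < r := Real.rpow_pos_of_pos hc _
    have hrk : r ^ k = Nval k z := by
      rw [hr, ← Real.rpow_natCast ((Nval k z) ^ ((k:ℝ)⁻¹)) k, ← Real.rpow_mul hc.le]
      rw [inv_mul_cancel₀ (Nat.cast_ne_zero.2 hk0.ne' : (k:ℝ) ≠ 0), Real.rpow_one]
    set z' : V → ℝ := r⁻¹ • z with hz'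
    have hNz' : Nval k z' = 1 := by
      rw [hz', Nval_smul, inv_pow, hrk, inv_mul_cancel₀ hc.ne']
    have hFz' : Fval E zs ≤ Fval E z' := hmin z' hNz'
    have hzz : z = r • z' := by
      rw [hz', smul_smul, mul_inv_cancel₀ hrpos.ne', one_smul]
    have hFz : Fval E z = r ^ k * Fval E z' := by
      rw [hzz, Fval_smul hU]
    rw [hFz, hrk.symm]
    have hrknn : (0:ℝ) ≤ r ^ k := (pow_pos hrpos k).le
    have : (k : ℝ) * Fval E zs ≤ (k : ℝ) * Fval E z' :=
      mul_le_mul_of_nonneg_left hFz' (Nat.cast_nonneg k)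
    nlinarith

lemma lamMin_key [Nonempty V] (E : Finset (Finset V)) {k : ℕ} (hk : Even k) (hk0 : 0 < k)
    (hU : Uniform E k) :
    lamMin E k ∈ specH E k ∧ ∀ z : V → ℝ, lamMin E k * Nval k z ≤ (k : ℝ) * Fval E z := by
  obtain ⟨zs, h1, hmin⟩ := exists_min E hk hk0
  set mu : ℝ := (k : ℝ) * Fval E zs with hmu
  have hglob : ∀ z : V → ℝ, mu * Nval k z ≤ (k : ℝ) * Fval E z := global_of_min hk hk0 hU h1 hmin
  have heq : (k : ℝ) * Fval E zs = mu * Nval k zs := by rw [h1, mul_one]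
  have heig : isEig E k mu zs := eig_of_eq hk0 hglob heq
  have hzsne : zs ≠ 0 := by
    intro h
    rw [h] at h1
    have : Nval k (0 : V → ℝ) = 0 := by
      rw [Nval]; exact Finset.sum_eq_zero fun v _ => zero_pow hk0.ne'
    rw [this] at h1
    exact one_ne_zero h1.symm
  have hmem : mu ∈ specH E k := ⟨zs, hzsne, heig⟩
  have hlb : ∀ lam ∈ specH E k, mu ≤ lam := by
    rintro lam ⟨z, hzne, hz⟩
    have h2 : lam * Nval k z = (k : ℝ) * Fval E z := eig_eq hk0 hU hz
    have h3 : mu * Nval k z ≤ lam * Nval k z := h2 ▸ hglob z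
    obtain ⟨v, hv⟩ := Function.ne_iff.1 hzne
    exact le_of_mul_le_mul_right h3 (Nval_pos hk hv)
  have hlam : lamMin E k = mu := by
    rw [lamMin]
    exact le_antisymm (csInf_le ⟨mu, hlb⟩ hmem) (le_csInf ⟨mu, hmem⟩ hlb)
  rw [hlam]
  exact ⟨hmem, hglob⟩

lemma lamMin_nonpos [Nonempty V] (E : Finset (Finset V)) {k : ℕ} (hk : Even k) (hk0 : 0 < k)
    (hk2 : 2 ≤ k) (hU : Uniform E k) : lamMin E k ≤ 0 := by
  obtain ⟨v0⟩ := (inferInstance : Nonempty V)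
  set z : V → ℝ := fun w => if w = v0 then 1 else 0 with hzdef
  have hN : Nval k z = 1 := by
    rw [Nval]
    have : ∀ v ∈ Finset.univ, (z v) ^ k = (if v = v0 then (1:ℝ) else 0) := by
      intro v _
      simp only [hzdef]
      split_ifs
      · exact one_pow k
      · exact zero_pow hk0.ne'
    rw [Finset.sum_congr rfl this, Finset.sum_ite_eq' Finset.univ v0 (fun _ => (1:ℝ))]
    simp
  have hF : Fval E z = 0 := by
    rw [Fval]
    refine Finset.sum_eq_zero fun e he => ?_
    have hcard : e.card = k := hU e he
    have : ∃ w ∈ e, w ≠ v0 := by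
      by_contra h
      push_neg at h
      have : e ⊆ {v0} := fun w hw => Finset.mem_singleton.2 (h w hw)
      have := Finset.card_le_card this
      rw [hcard, Finset.card_singleton] at this
      omega
    obtain ⟨w, hw, hwne⟩ := this
    refine Finset.prod_eq_zero hw ?_
    simp [hzdef, hwne]
  have := (lamMin_key E hk hk0 hU).2 z
  rw [hN, hF, mul_one, mul_zero] at this
  exact this

lemma exists_mem_ne {e : Finset V} {k : ℕ} (hcard : e.card = k) (hk2 : 2 ≤ k) (v0 : V) :
    ∃ w ∈ e, w ≠ v0 := by
  by_contra h
  push_neg at h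
  have hsub : e ⊆ {v0} := fun w hw => Finset.mem_singleton.2 (h w hw)
  have := Finset.card_le_card hsub
  rw [hcard, Finset.card_singleton] at this
  omega

lemma aux_le [Nonempty V] (A B : Finset (Finset V)) (W : Finset V) {k : ℕ}
    (hk : Even k) (hk0 : 0 < k) (hk2 : 2 ≤ k)
    (hA : ∀ e ∈ A, e ⊆ W) (hB : ∀ e ∈ B, ∃ v ∈ e, v ∉ W)
    (hU : Uniform (A ∪ B) k) :
    lamMin (A ∪ B) k ≤ lamMin A k := by
  have hUA : Uniform A k := fun e he => hU e (Finset.mem_union_left _ he)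
  obtain ⟨⟨z0, hz0ne, hz0eig⟩, _⟩ := lamMin_key A hk hk0 hUA
  have heq0 : lamMin A k * Nval k z0 = (k : ℝ) * Fval A z0 := eig_eq hk0 hUA hz0eig
  set z0' : V → ℝ := fun v => if v ∈ W then z0 v else 0 with hz0'
  have hFA : Fval A z0' = Fval A z0 := by
    rw [Fval, Fval]
    refine Finset.sum_congr rfl fun e he => Finset.prod_congr rfl fun w hw => ?_
    simp only [hz0']
    rw [if_pos (hA e he hw)]
  have hFU : Fval (A ∪ B) z0' = Fval A z0' := by
    rw [Fval, Fval]
    refine (Finset.sum_subset Finset.subset_union_left fun e he heA => ?_).symm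
    have heB : e ∈ B := by
      rcases Finset.mem_union.1 he with h | h
      · exact absurd h heA
      · exact h
    obtain ⟨v, hv, hvW⟩ := hB e heB
    refine Finset.prod_eq_zero hv ?_
    simp only [hz0']
    rw [if_neg hvW]
  have hNle : Nval k z0' ≤ Nval k z0 := by
    refine Finset.sum_le_sum fun v _ => ?_
    simp only [hz0']
    split_ifs
    · exact le_refl _
    · rw [zero_pow hk0.ne']
      exact hk.pow_nonneg _
  have hmu0 : lamMin A k ≤ 0 := lamMin_nonpos A hk hk0 hk2 hUA
  have hglobU := (lamMin_key (A ∪ B) hk hk0 hU).2 z0'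
  rw [hFU, hFA, ← heq0] at hglobU
  -- hglobU : lamMin (A∪B) k * Nval k z0' ≤ lamMin A k * Nval k z0
  have hstep : lamMin A k * Nval k z0 ≤ lamMin A k * Nval k z0' :=
    mul_le_mul_of_nonpos_left hNle hmu0
  have hfin : lamMin (A ∪ B) k * Nval k z0' ≤ lamMin A k * Nval k z0' :=
    le_trans hglobU hstep
  rcases eq_or_lt_of_le (Nval_nonneg hk z0') with h0 | hpos
  · -- Nval k z0' = 0
    have hz0'0 : z0' = 0 := Nval_eq_zero hk hk0 h0.symm
    have hF0 : Fval A z0 = 0 := by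
      rw [← hFA, hz0'0, Fval_zero hk0 hUA]
    obtain ⟨v, hv⟩ := Function.ne_iff.1 hz0ne
    have hNpos : 0 < Nval k z0 := Nval_pos hk hv
    have : lamMin A k = 0 := by
      have := heq0
      rw [hF0, mul_zero] at this
      exact (mul_eq_zero.1 this).resolve_right hNpos.ne'
    rw [this]
    exact lamMin_nonpos (A ∪ B) hk hk0 hk2 hU
  · exact le_of_mul_le_mul_right hfin hpos

end Stmt9Aux

open Stmt9Aux

/-- If `x` is a first eigenvector of `G = G₀(u) ⋄ H(u)` with `x u = 0` and `x|_{G₀} ≠ 0`, then `λ_min(G₀) = λ_min(G)` and `x|_{G₀}` is a first eigenvector of `G₀`. -/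
theorem stmt9 [Fintype V] [DecidableEq V]
    (V0 VH : Finset V) (u : V) (E0 EH : Finset (Finset V)) (k : ℕ)
    (hk : Even k) (hk0 : 0 < k)
    (hI : V0 ∩ VH = {u}) (hcover : V0 ∪ VH = Finset.univ)
    (hE0 : ∀ e ∈ E0, e ⊆ V0) (hEH : ∀ e ∈ EH, e ⊆ VH)
    (hU : Uniform (E0 ∪ EH) k) (hconn : HConnected (E0 ∪ EH))
    (hE0ne : E0.Nonempty) (hEHne : EH.Nonempty)
    (x : V → ℝ) (hx : IsFirstEigvec (E0 ∪ EH) k x) (hxu : x u = 0)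
    (hres : ∃ v ∈ V0, x v ≠ 0) :
    lamMin E0 k = lamMin (E0 ∪ EH) k ∧
    IsFirstEigvec E0 k (fun v => if v ∈ V0 then x v else 0) := by
  have hNV : Nonempty V := ⟨u⟩
  have hk2 : 2 ≤ k := by obtain ⟨m, rfl⟩ := hk; omega
  have hU0 : Uniform E0 k := fun e he => hU e (Finset.mem_union_left _ he)
  have hUH : Uniform EH k := fun e he => hU e (Finset.mem_union_right _ he)
  have hmemu : ∀ v, v ∈ V0 → v ∈ VH → v = u := fun v h1 h2 => by
    have : v ∈ V0 ∩ VH := Finset.mem_inter.2 ⟨h1, h2⟩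
    rw [hI] at this
    exact Finset.mem_singleton.1 this
  -- edges of EH have a vertex outside V0; edges of E0 have a vertex outside VH
  have hBH : ∀ e ∈ EH, ∃ v ∈ e, v ∉ V0 := by
    intro e he
    obtain ⟨w, hw, hwne⟩ := exists_mem_ne (hUH e he) hk2 u
    exact ⟨w, hw, fun hwV0 => hwne (hmemu w hwV0 (hEH e he hw))⟩
  have hB0 : ∀ e ∈ E0, ∃ v ∈ e, v ∉ VH := by
    intro e he
    obtain ⟨w, hw, hwne⟩ := exists_mem_ne (hU0 e he) hk2 u
    exact ⟨w, hw, fun hwVH => hwne (hmemu w (hE0 e he hw) hwVH)⟩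
  have h4 : lamMin (E0 ∪ EH) k ≤ lamMin E0 k := aux_le E0 EH V0 hk hk0 hk2 hE0 hBH hU
  have h5 : lamMin (E0 ∪ EH) k ≤ lamMin EH k := by
    have := aux_le EH E0 VH hk hk0 hk2 hEH hB0 (by rwa [Finset.union_comm])
    rwa [Finset.union_comm] at this
  set y : V → ℝ := fun v => if v ∈ V0 then x v else 0 with hy
  set w : V → ℝ := fun v => if v ∈ V0 then 0 else x v with hw
  have hNsplit : Nval k x = Nval k y + Nval k w := by
    rw [Nval, Nval, Nval, ← Finset.sum_add_distrib]
    refine Finset.sum_congr rfl fun v _ => ?_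
    simp only [hy, hw]
    split_ifs
    · rw [zero_pow hk0.ne', add_zero]
    · rw [zero_pow hk0.ne', zero_add]
  have hdisjE : Disjoint E0 EH := by
    rw [Finset.disjoint_left]
    intro e he0 heH
    have hsub : e ⊆ {u} := fun v hv =>
      Finset.mem_singleton.2 (hmemu v (hE0 e he0 hv) (hEH e heH hv))
    have := Finset.card_le_card hsub
    rw [hU e (Finset.mem_union_left _ he0), Finset.card_singleton] at this
    omega
  have hFsplit : Fval (E0 ∪ EH) x = Fval E0 y + Fval EH w := by
    rw [Fval, Finset.sum_union hdisjE]
    congr 1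
    · refine Finset.sum_congr rfl fun e he => Finset.prod_congr rfl fun v hv => ?_
      simp only [hy]
      rw [if_pos (hE0 e he hv)]
    · refine Finset.sum_congr rfl fun e he => Finset.prod_congr rfl fun v hv => ?_
      simp only [hw]
      split_ifs with h
      · have : v = u := hmemu v h (hEH e he hv)
        rw [this, hxu]
      · rfl
  obtain ⟨v0, hv0V0, hv0ne⟩ := hres
  have hyv0 : y v0 ≠ 0 := by
    simp only [hy]
    rwa [if_pos hv0V0]
  have hNy : 0 < Nval k y := Nval_pos hk hyv0
  have hNw : 0 ≤ Nval k w := Nval_nonneg hk w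
  have heigx : lamMin (E0 ∪ EH) k * Nval k x = (k : ℝ) * Fval (E0 ∪ EH) x :=
    eig_eq hk0 hU hx.2
  have hglob0 := (lamMin_key E0 hk hk0 hU0).2 y
  have hglobH := (lamMin_key EH hk hk0 hUH).2 w
  set lam : ℝ := lamMin (E0 ∪ EH) k
  set mu0 : ℝ := lamMin E0 k
  set muH : ℝ := lamMin EH k
  have h1 : lam * (Nval k y + Nval k w) = (k:ℝ) * Fval E0 y + (k:ℝ) * Fval EH w := by
    rw [← hNsplit, heigx, hFsplit, mul_add]
  have hA1 : lam * Nval k y ≤ mu0 * Nval k y := mul_le_mul_of_nonneg_right h4 hNy.le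
  have hA2 : lam * Nval k w ≤ muH * Nval k w := mul_le_mul_of_nonneg_right h5 hNw
  have hkey1 : (k:ℝ) * Fval E0 y = lam * Nval k y := by nlinarith
  have hkey2 : mu0 * Nval k y = lam * Nval k y := by nlinarith
  have hmueq : mu0 = lam := mul_right_cancel₀ hNy.ne' hkey2
  refine ⟨hmueq, ?_, ?_⟩
  · intro h
    have := congrFun h v0
    exact hyv0 this
  · have heqy : (k:ℝ) * Fval E0 y = mu0 * Nval k y := by rw [hkey1, hkey2]
    exact eig_of_eq hk0 (lamMin_key E0 hk hk0 hU0).2 heqy
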